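/- For n ≥ 2, the cyclic Eulerian polynomial satisfies C_n(x) = n·x·A_{n−1}(x), where A_{n−1}(x) is the (n−1)-st Eulerian polynomial. -/

import Mathlib

noncomputable def desc (n : ℕ) (σ : Equiv.Perm (Fin n)) : ℕ :=
  Nat.card {i : Fin n // ∃ h : i.val + 1 < n, σ ⟨i.val + 1, h⟩ < σ i}

noncomputable def exce (n : ℕ) (σ : Equiv.Perm (Fin n)) : ℕ :=
  Nat.card {i : Fin n // i < σ i}

def cyclicSucc {n : ℕ} (i : Fin n) : Fin n := ⟨(i.val + 1) % n, Nat.mod_lt _ i.pos⟩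

noncomputable def cdes (n : ℕ) (σ : Equiv.Perm (Fin n)) : ℕ :=
  Nat.card {i : Fin n // σ (cyclicSucc i) < σ i}

def dfsAdj {α β : Type*} [DecidableEq α] (X : α → α → Prop) (Y : β → β → Prop) (σ φ : α ≃ β) : Prop :=
  ∃ a b, X a b ∧ Y (σ a) (σ b) ∧ φ = (Equiv.swap a b).trans σ

noncomputable def outdeg {α β : Type*} [DecidableEq α] (X : α → α → Prop) (Y : β → β → Prop) (σ : α ≃ β) : ℕ :=
  Nat.card {φ : α ≃ β // dfsAdj X Y σ φ}

noncomputable def ODP {α β : Type*} [Fintype α] [Fintype β] [DecidableEq α] [DecidableEq β]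
    (X : α → α → Prop) (Y : β → β → Prop) : Polynomial ℤ :=
  ∑ σ : α ≃ β, Polynomial.X ^ outdeg X Y σ

open scoped Classical in
noncomputable def ODPc {α β : Type*} [Fintype α] [Fintype β] [DecidableEq α] [DecidableEq β]
    (X : α → α → Prop) (Y : β → β → Prop) (P : (α ≃ β) → Prop) : Polynomial ℤ :=
  ∑ σ : α ≃ β, if P σ then Polynomial.X ^ outdeg X Y σ else 0

def Tour (n : ℕ) : Fin n → Fin n → Prop := fun i j => j < i
def DPath (n : ℕ) : Fin n → Fin n → Prop := fun i j => j.val = i.val + 1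
def DCycle (n : ℕ) : Fin n → Fin n → Prop := fun i j => j = cyclicSucc i

def isPEO {n : ℕ} (R : Fin n → Fin n → Prop) : Prop :=
  (∀ i j, R i j → j < i) ∧ ∀ i j, R i j → ∀ a b : Fin n, j ≤ a → a < b → b ≤ i → R b a

def dirChordal {n : ℕ} (R : Fin n → Fin n → Prop) : Prop :=
  ∃ e : Equiv.Perm (Fin n), isPEO fun u v => R (e u) (e v)

def chordal {V : Type*} (G : SimpleGraph V) : Prop :=
  ∀ m : ℕ, 4 ≤ m → ∀ f : ZMod m → V, Function.Injective f →
    (∀ i, G.Adj (f i) (f (i + 1))) →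
    ∃ i j : ZMod m, i ≠ j ∧ j ≠ i + 1 ∧ i ≠ j + 1 ∧ G.Adj (f i) (f j)


open Equiv Polynomial
open Fin.NatCast

noncomputable def eExt {m : ℕ} (τ : Perm (Fin (m + 1))) : Perm (Fin (m + 2)) :=
  (finSuccEquivLast.trans (τ.optionCongr)).trans finSuccEquivLast.symm

lemma eExt_castSucc {m : ℕ} (τ : Perm (Fin (m + 1))) (j : Fin (m + 1)) :
    eExt τ (Fin.castSucc j) = Fin.castSucc (τ j) := by
  simp [eExt, finSuccEquivLast_castSucc, finSuccEquivLast_symm_some]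

lemma eExt_last {m : ℕ} (τ : Perm (Fin (m + 1))) :
    eExt τ (Fin.last (m + 1)) = Fin.last (m + 1) := by
  simp [eExt, finSuccEquivLast_last]

lemma eExt_injective {m : ℕ} : Function.Injective (eExt (m := m)) := by
  intro τ τ' h
  refine Equiv.ext fun j => ?_
  have := congrArg (fun σ : Perm (Fin (m+2)) => σ (Fin.castSucc j)) h
  simp only [eExt_castSucc] at this
  exact Fin.castSucc_injective _ this

lemma finRotate_eq_cyclicSucc {m : ℕ} (i : Fin (m + 1)) :
    finRotate (m + 1) i = cyclicSucc i := by
  rw [finRotate_succ_apply]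
  ext
  simp [Fin.add_def, cyclicSucc]

lemma finRotate_pow_apply {m : ℕ} (k : ℕ) (i : Fin (m + 1)) :
    ((finRotate (m + 1)) ^ k) i = i + (k : Fin (m+1)) := by
  induction k with
  | zero => simp
  | succ k ih =>
    rw [pow_succ', Equiv.Perm.mul_apply, ih, finRotate_succ_apply]
    push_cast
    exact add_assoc _ _ _

lemma cdes_rot {m : ℕ} (σ : Perm (Fin (m + 1))) :
    cdes (m+1) ((finRotate (m+1)).trans σ) = cdes (m+1) σ := by
  unfold cdes
  apply Nat.card_congr
  apply Equiv.subtypeEquiv (finRotate (m+1))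
  intro i
  simp only [Equiv.trans_apply]
  rw [finRotate_eq_cyclicSucc, finRotate_eq_cyclicSucc]

lemma cdes_rot_pow {m : ℕ} (k : ℕ) (σ : Perm (Fin (m + 1))) :
    cdes (m+1) (((finRotate (m+1)) ^ k).trans σ) = cdes (m+1) σ := by
  induction k with
  | zero => simp [Equiv.Perm.one_trans]
  | succ k ih =>
    have : (((finRotate (m+1)) ^ (k+1)).trans σ)
        = (finRotate (m+1)).trans (((finRotate (m+1)) ^ k).trans σ) := by
      refine Equiv.ext fun i => ?_
      simp [pow_succ, Equiv.Perm.mul_apply]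
    rw [this, cdes_rot, ih]

lemma cdes_eExt {m : ℕ} (τ : Perm (Fin (m + 1))) :
    cdes (m+2) (eExt τ) = desc (m+1) τ + 1 := by
  classical
  unfold cdes desc
  rw [Nat.card_eq_fintype_card, Nat.card_eq_fintype_card,
    Fintype.card_subtype, Fintype.card_subtype]
  have key : (Finset.univ.filter fun i : Fin (m+2) => eExt τ (cyclicSucc i) < eExt τ i)
      = insert (Fin.last (m+1))
        ((Finset.univ.filter fun i : Fin (m+1) =>
          ∃ h : i.val + 1 < m + 1, τ ⟨i.val + 1, h⟩ < τ i).image Fin.castSucc) := by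
    ext i
    simp only [Finset.mem_filter, Finset.mem_univ, true_and, Finset.mem_insert,
      Finset.mem_image]
    constructor
    · intro hi
      by_cases hlast : i = Fin.last (m+1)
      · exact Or.inl hlast
      · right
        have hval : i.val < m + 1 := by
          have := Fin.lt_last_iff_ne_last.mpr hlast
          exact this
        obtain ⟨j, rfl⟩ : ∃ j : Fin (m+1), i = Fin.castSucc j :=
          ⟨⟨i.val, hval⟩, by ext; simp⟩
        refine ⟨j, ?_, rfl⟩
        by_cases hm : j.val = m
        · exfalso
          have hc : cyclicSucc (Fin.castSucc j) = Fin.last (m+1) := by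
            ext; simp [cyclicSucc, hm, Nat.mod_eq_of_lt]
          rw [hc, eExt_last, eExt_castSucc] at hi
          exact absurd hi (Fin.castSucc_lt_last _).asymm
        · have hval2 : j.val + 1 < m + 1 := by omega
          refine ⟨hval2, ?_⟩
          have hc : cyclicSucc (Fin.castSucc j) = Fin.castSucc ⟨j.val + 1, hval2⟩ := by
            ext; simp [cyclicSucc, Nat.mod_eq_of_lt (by omega : j.val + 1 < m + 2)]
          rw [hc, eExt_castSucc, eExt_castSucc, Fin.castSucc_lt_castSucc_iff] at hi
          exact hi
    · rintro (rfl | ⟨j, ⟨h1, h2⟩, rfl⟩)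
      · have hc : cyclicSucc (Fin.last (m+1)) = Fin.castSucc 0 := by
          ext; simp [cyclicSucc]
        rw [hc, eExt_last, eExt_castSucc]
        exact Fin.castSucc_lt_last _
      · have hc : cyclicSucc (Fin.castSucc j) = Fin.castSucc ⟨j.val + 1, h1⟩ := by
          ext; simp [cyclicSucc, Nat.mod_eq_of_lt (by omega : j.val + 1 < m + 2)]
        rw [hc, eExt_castSucc, eExt_castSucc, Fin.castSucc_lt_castSucc_iff]
        exact h2
  rw [key, Finset.card_insert_of_notMem, Finset.card_image_of_injective _
    (Fin.castSucc_injective _)]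
  intro h
  rw [Finset.mem_image] at h
  obtain ⟨j, _, hj⟩ := h
  exact absurd hj (Fin.castSucc_lt_last j).ne

noncomputable def Phi {m : ℕ} (p : Fin (m+2) × Perm (Fin (m+1))) : Perm (Fin (m+2)) :=
  ((finRotate (m+2)) ^ p.1.val).trans (eExt p.2)

lemma eExt_eq_last_iff {m : ℕ} (τ : Perm (Fin (m+1))) (j : Fin (m+2)) :
    eExt τ j = Fin.last (m+1) ↔ j = Fin.last (m+1) := by
  constructor
  · intro h
    exact (eExt τ).injective (by rw [h, eExt_last])
  · rintro rfl; exact eExt_last τ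

lemma Phi_injective {m : ℕ} : Function.Injective (Phi (m := m)) := by
  rintro ⟨k, τ⟩ ⟨k', τ'⟩ h
  set i : Fin (m+2) := Fin.last (m+1) - k with hi
  have hik : i + (k.val : Fin (m+2)) = Fin.last (m+1) := by
    rw [Fin.cast_val_eq_self, hi, sub_add_cancel]
  have h1 : Phi (k, τ) i = Fin.last (m+1) := by
    simp only [Phi, Equiv.trans_apply, finRotate_pow_apply, hik, eExt_last]
  have h2 : Phi (k', τ') i = Fin.last (m+1) := by rw [← h, h1]
  simp only [Phi, Equiv.trans_apply, finRotate_pow_apply, eExt_eq_last_iff] at h2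
  rw [Fin.cast_val_eq_self] at h2
  have hk : k = k' := by
    have := hik
    rw [Fin.cast_val_eq_self] at this
    have := this.trans h2.symm
    exact add_left_cancel this
  subst hk
  have hτ : eExt τ = eExt τ' := by
    refine Equiv.ext fun j => ?_
    have := congrArg (fun σ : Perm (Fin (m+2)) =>
      σ (((finRotate (m+2)) ^ k.val).symm j)) h
    simpa only [Phi, Equiv.trans_apply, Equiv.apply_symm_apply] using this
  rw [eExt_injective hτ]

lemma Phi_bijective {m : ℕ} : Function.Bijective (Phi (m := m)) := by
  rw [Fintype.bijective_iff_injective_and_card]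
  refine ⟨Phi_injective, ?_⟩
  simp [Fintype.card_perm, Nat.factorial_succ]

theorem cyclic_eulerian_factorization (n : ℕ) (hn : 2 ≤ n) :
    (∑ σ : Equiv.Perm (Fin n), (Polynomial.X : Polynomial ℤ) ^ cdes n σ) =
      (n : Polynomial ℤ) * Polynomial.X *
        ∑ τ : Equiv.Perm (Fin (n - 1)), Polynomial.X ^ desc (n - 1) τ := by
  obtain ⟨m, rfl⟩ : ∃ m, n = m + 2 := ⟨n - 2, by omega⟩
  have hcd : ∀ p : Fin (m+2) × Perm (Fin (m+1)),
      (Polynomial.X : Polynomial ℤ) ^ (desc (m+1) p.2 + 1) = Polynomial.X ^ cdes (m+2) (Phi p) := by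
    rintro ⟨k, τ⟩
    rw [Phi, cdes_rot_pow, cdes_eExt]
  rw [← Fintype.sum_bijective Phi Phi_bijective _ _ hcd]
  show _ = ((m+2 : ℕ) : Polynomial ℤ) * Polynomial.X *
        ∑ τ : Equiv.Perm (Fin (m+1)), Polynomial.X ^ desc (m+1) τ
  rw [Fintype.sum_prod_type]
  simp only [pow_succ]
  rw [Finset.sum_const, Finset.card_univ, Fintype.card_fin, nsmul_eq_mul,
    ← Finset.sum_mul]
  push_cast
  ring
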